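/- The symmetry formula c_z^{(u,v)}(n,i) · c_z^{(u,v)}(n, 2^n+1−i) = 1 holds for all n ≥ 0 and 1 ≤ i ≤ 2^n if and only if u = v and z = 1. -/

import Mathlib

/-- The matrix `L_u`. -/
def Lmat (u : ℕ) : Matrix (Fin 2) (Fin 2) ℕ := !![1, 0; u, 1]

/-- The matrix `R_v`. -/
def Rmat (v : ℕ) : Matrix (Fin 2) (Fin 2) ℕ := !![1, v; 0, 1]

/-- The word in `L_u`, `R_v` corresponding to the 0-indexed position `j` in row `n`
(bits of `j`, least significant = last move, `0 ↦ L`, `1 ↦ R`). -/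
def cwWord (u v : ℕ) : ℕ → ℕ → Matrix (Fin 2) (Fin 2) ℕ
  | 0, _ => 1
  | n + 1, j => (if j % 2 = 0 then Lmat u else Rmat v) * cwWord u v n (j / 2)

/-- A matrix acting as a linear fractional transformation on `ℚ`. -/
def lft (M : Matrix (Fin 2) (Fin 2) ℕ) (z : ℚ) : ℚ :=
  ((M 0 0 : ℚ) * z + (M 0 1 : ℚ)) / ((M 1 0 : ℚ) * z + (M 1 1 : ℚ))

/-- `cw u v z n i` is the `i`-th vertex (1-indexed) of row `n` of the
(u,v)-Calkin-Wilf tree rooted at `z`. -/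
def cw (u v : ℕ) (z : ℚ) (n i : ℕ) : ℚ := lft (cwWord u v n (i - 1)) z

def flipM (M : Matrix (Fin 2) (Fin 2) ℕ) : Matrix (Fin 2) (Fin 2) ℕ :=
  !![M 1 1, M 1 0; M 0 1, M 0 0]

lemma flip_L (u : ℕ) (M : Matrix (Fin 2) (Fin 2) ℕ) :
    flipM (Lmat u * M) = Rmat u * flipM M := by
  ext i j
  fin_cases i <;> fin_cases j <;>
    simp [flipM, Lmat, Rmat, Matrix.mul_apply, Fin.sum_univ_two] <;> ring

lemma flip_R (u : ℕ) (M : Matrix (Fin 2) (Fin 2) ℕ) :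
    flipM (Rmat u * M) = Lmat u * flipM M := by
  ext i j
  fin_cases i <;> fin_cases j <;>
    simp [flipM, Lmat, Rmat, Matrix.mul_apply, Fin.sum_univ_two] <;> ring

lemma word_flip (u : ℕ) : ∀ n j, j < 2 ^ n →
    cwWord u u n (2 ^ n - 1 - j) = flipM (cwWord u u n j)
  | 0, j, hj => by
    interval_cases j
    simp [cwWord, flipM, Matrix.one_fin_two]
  | n + 1, j, hj => by
    have hP : 0 < 2 ^ n := Nat.pow_pos (by norm_num)
    have h2P : 2 ^ (n + 1) = 2 * 2 ^ n := by ring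
    rw [h2P] at hj ⊢
    have h1 : (2 * 2 ^ n - 1 - j) / 2 = 2 ^ n - 1 - j / 2 := by omega
    have h2 : (2 * 2 ^ n - 1 - j) % 2 = 1 - j % 2 := by omega
    have hj2 : j / 2 < 2 ^ n := by omega
    have IH := word_flip u n (j / 2) hj2
    show (if (2 * 2 ^ n - 1 - j) % 2 = 0 then Lmat u else Rmat u) *
        cwWord u u n ((2 * 2 ^ n - 1 - j) / 2) = flipM (cwWord u u (n + 1) j)
    rw [h1, h2, IH]
    show _ = flipM ((if j % 2 = 0 then Lmat u else Rmat u) * cwWord u u n (j / 2))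
    rcases Nat.mod_two_eq_zero_or_one j with h | h <;>
      simp [h, flip_L, flip_R]

lemma word_pos (u v : ℕ) : ∀ n j,
    1 ≤ cwWord u v n j 0 0 + cwWord u v n j 0 1 ∧
    1 ≤ cwWord u v n j 1 0 + cwWord u v n j 1 1
  | 0, j => by simp [cwWord, Matrix.one_fin_two]
  | n + 1, j => by
    obtain ⟨h1, h2⟩ := word_pos u v n (j / 2)
    have e : cwWord u v (n + 1) j =
        (if j % 2 = 0 then Lmat u else Rmat v) * cwWord u v n (j / 2) := rfl
    rw [e]
    rcases Nat.mod_two_eq_zero_or_one j with h | h <;>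
      simp [h, Lmat, Rmat, Matrix.mul_apply, Fin.sum_univ_two] <;>
      constructor <;> nlinarith

theorem symmetry_formula_iff (u v : ℕ) (hu : 0 < u) (hv : 0 < v)
    (z : ℚ) (hz : 0 < z) :
    (∀ n i : ℕ, 1 ≤ i → i ≤ 2 ^ n →
        cw u v z n i * cw u v z n (2 ^ n + 1 - i) = 1) ↔ (u = v ∧ z = 1) := by
  constructor
  · intro h
    have h0 := h 0 1 le_rfl (by norm_num)
    simp [cw, cwWord, lft, Matrix.one_fin_two] at h0
    have hz1 : z = 1 := by
      have hfac : (z - 1) * (z + 1) = 0 := by linear_combination h0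
      rcases mul_eq_zero.mp hfac with h' | h' <;> linarith
    refine ⟨?_, hz1⟩
    subst hz1
    have h1 := h 1 1 le_rfl (by norm_num)
    have e1 : cwWord u v 1 0 = Lmat u := by simp [cwWord]
    have e2 : cwWord u v 1 1 = Rmat v := by simp [cwWord]
    norm_num [cw, lft, e1, e2, Lmat, Rmat] at h1
    have hupos : (0:ℚ) < (u:ℚ) + 1 := by positivity
    field_simp at h1
    have : (v : ℚ) = (u : ℚ) := by linarith
    exact_mod_cast this.symm
  · rintro ⟨rfl, rfl⟩
    intro n i hi1 hi2
    have hP : 0 < 2 ^ n := Nat.pow_pos (by norm_num)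
    have e : 2 ^ n + 1 - i - 1 = 2 ^ n - 1 - (i - 1) := by omega
    have hlt : i - 1 < 2 ^ n := by omega
    obtain ⟨hA, hB⟩ := word_pos u u n (i - 1)
    unfold cw
    rw [e, word_flip u n (i - 1) hlt]
    set M := cwWord u u n (i - 1) with hM
    have hAq : (0:ℚ) < (M 0 0 : ℚ) + (M 0 1 : ℚ) := by
      have : (0:ℚ) < ((M 0 0 + M 0 1 : ℕ) : ℚ) := by exact_mod_cast hA
      push_cast at this; linarith
    have hBq : (0:ℚ) < (M 1 0 : ℚ) + (M 1 1 : ℚ) := by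
      have : (0:ℚ) < ((M 1 0 + M 1 1 : ℕ) : ℚ) := by exact_mod_cast hB
      push_cast at this; linarith
    have f00 : flipM M 0 0 = M 1 1 := rfl
    have f01 : flipM M 0 1 = M 1 0 := rfl
    have f10 : flipM M 1 0 = M 0 1 := rfl
    have f11 : flipM M 1 1 = M 0 0 := rfl
    simp only [lft, f00, f01, f10, f11, mul_one]
    have d1 : ((M 1 0 : ℚ) + (M 1 1 : ℚ)) ≠ 0 := ne_of_gt hBq
    have d2 : ((M 0 1 : ℚ) + (M 0 0 : ℚ)) ≠ 0 := ne_of_gt (by linarith)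
    rw [div_mul_div_comm, div_eq_one_iff_eq (mul_ne_zero d1 d2)]
    ring
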